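/- arXiv:2412.04389 — 4 statements merged into one kernel-verified Lean document; each statement's English description precedes it below -/
import Mathlib

section
/- For any hypergraph H, b_L(H) = |V(H)| - m(H), where m(H) is the maximum cardinality of a C-matching in the incidence graph of H. -/
open scoped Classical

section Defs

variable {V E : Type*}

/-- The set of vertices eventually burned when `B` is initially burned:
a vertex burns if it is initially burned, or if some hyperedge contains it and
all other vertices of that hyperedge are burned. -/
inductive Burns (edges : E → Finset V) (B : Set V) : V → Prop
  | init (v : V) : v ∈ B → Burns edges B v
  | spread (h : E) (v : V) : v ∈ edges h →
      (∀ u, u ∈ edges h → u ≠ v → Burns edges B u) → Burns edges B v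

/-- `B` is a lazy burning set if every vertex eventually burns. -/
def IsLazyBurningSet (edges : E → Finset V) (B : Set V) : Prop :=
  ∀ v, Burns edges B v

/-- The lazy burning number: minimum size of a lazy burning set. -/
noncomputable def lazyBurningNumber [Fintype V] (edges : E → Finset V) : ℕ :=
  sInf {n | ∃ B : Finset V, B.card = n ∧ IsLazyBurningSet edges ↑B}

/-- A `C`-matching in the incidence graph: a list of incidence pairs `(vᵢ, hᵢ)`
with the `vᵢ` distinct, such that `hᵢ` contains none of the later vertices. -/
def IsCMatching (edges : E → Finset V) (L : List (V × E)) : Prop :=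
  (∀ p ∈ L, p.1 ∈ edges p.2) ∧ (L.map Prod.fst).Nodup ∧
  ∀ i j (hi : i < L.length) (hj : j < L.length), i < j →
    (L.get ⟨j, hj⟩).1 ∉ edges (L.get ⟨i, hi⟩).2

/-- `m(H)`: maximum cardinality (length) of a `C`-matching. -/
noncomputable def maxCMatching (edges : E → Finset V) : ℕ :=
  sSup {k | ∃ L : List (V × E), IsCMatching edges L ∧ L.length = k}

/-- A chronological list of lazy burnings starting from `B0`: a list of pairs
`(hᵢ, vᵢ)` with `vᵢ ∈ hᵢ` and `hᵢ \ {vᵢ} ⊆ B_{i-1} = B0 ∪ {v₁, …, v_{i-1}}`. -/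
def IsChronList (edges : E → Finset V) (B0 : Set V) (L : List (E × V)) : Prop :=
  ∀ i (hi : i < L.length),
    (L.get ⟨i, hi⟩).2 ∈ edges (L.get ⟨i, hi⟩).1 ∧
    ∀ u, u ∈ edges (L.get ⟨i, hi⟩).1 → u ≠ (L.get ⟨i, hi⟩).2 →
      u ∈ B0 ∨ ∃ j, ∃ hj : j < L.length, j < i ∧ u = (L.get ⟨j, hj⟩).2

/-- The dual hypergraph: vertices are the hyperedges of `H`, and for each vertex
`v` of `H` there is a hyperedge `N(v) = {h : v ∈ h}`. -/
noncomputable def dualEdges [Fintype E] (edges : E → Finset V) (v : V) : Finset E :=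
  Finset.univ.filter (fun h => v ∈ edges h)

/-- `U` induces a subhypergraph all of whose hyperedges have cardinality `> 1`. -/
def GoodSet (edges : E → Finset V) (U : Finset V) : Prop :=
  ∀ h : E, ((edges h) ∩ U).Nonempty → 1 < ((edges h) ∩ U).card

/-- The vertex set of the core of `H`: the maximum induced subhypergraph all of
whose hyperedges have cardinality `> 1`. -/
noncomputable def coreSet [Fintype V] (edges : E → Finset V) : Finset V :=
  (Finset.univ : Finset V).powerset.sup (fun U => if GoodSet edges U then U else ∅)

/-- The zero forcing closure: a black vertex `u` with unique white neighbor `v`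
forces `v`. -/
inductive ZFClosure {α : Type*} (G : SimpleGraph α) (B : Set α) : α → Prop
  | init (v : α) : v ∈ B → ZFClosure G B v
  | force (u v : α) : ZFClosure G B u → G.Adj u v →
      (∀ w, G.Adj u w → w ≠ v → ZFClosure G B w) → ZFClosure G B v

def IsZeroForcingSet {α : Type*} (G : SimpleGraph α) (B : Set α) : Prop :=
  ∀ v, ZFClosure G B v

noncomputable def zeroForcingNumber {α : Type*} [Fintype α] (G : SimpleGraph α) : ℕ :=
  sInf {n | ∃ B : Finset α, B.card = n ∧ IsZeroForcingSet G ↑B}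

/-- The skew zero forcing closure: any vertex `u` (black or white) with a unique
white neighbor `v` forces `v`. -/
inductive SkewZFClosure {α : Type*} (G : SimpleGraph α) (B : Set α) : α → Prop
  | init (v : α) : v ∈ B → SkewZFClosure G B v
  | force (u v : α) : G.Adj u v →
      (∀ w, G.Adj u w → w ≠ v → SkewZFClosure G B w) → SkewZFClosure G B v

def IsSkewZeroForcingSet {α : Type*} (G : SimpleGraph α) (B : Set α) : Prop :=
  ∀ v, SkewZFClosure G B v

noncomputable def skewZeroForcingNumber {α : Type*} [Fintype α] (G : SimpleGraph α) : ℕ :=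
  sInf {n | ∃ B : Finset α, B.card = n ∧ IsSkewZeroForcingSet G ↑B}

/-- The incidence (Levi) graph of a hypergraph. -/
def incidenceGraph (edges : E → Finset V) : SimpleGraph (V ⊕ E) where
  Adj x y := (∃ v h, x = Sum.inl v ∧ y = Sum.inr h ∧ v ∈ edges h) ∨
             (∃ v h, x = Sum.inr h ∧ y = Sum.inl v ∧ v ∈ edges h)
  symm := by
    constructor
    rintro x y (⟨v, h, rfl, rfl, hm⟩ | ⟨v, h, rfl, rfl, hm⟩)
    · exact Or.inr ⟨v, h, rfl, rfl, hm⟩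
    · exact Or.inl ⟨v, h, rfl, rfl, hm⟩
  loopless := by
    constructor
    rintro x (⟨v, h, h1, h2, _⟩ | ⟨v, h, h1, h2, _⟩) <;> subst h1 <;> simp_all

/-- The star `K_{1,j}` with center `0`. -/
def starGraph (j : ℕ) : SimpleGraph (Fin (j + 1)) where
  Adj a b := a ≠ b ∧ (a = 0 ∨ b = 0)
  symm := ⟨fun _ _ ⟨hne, hor⟩ => ⟨hne.symm, hor.symm⟩⟩
  loopless := ⟨fun _ ha => ha.1 rfl⟩

end Defs

section Aux

variable {V E : Type*}

lemma burns_mono (edges : E → Finset V) {B B' : Set V} (hBB : B ⊆ B') {v : V}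
    (h : Burns edges B v) : Burns edges B' v := by
  induction h with
  | init v hv => exact Burns.init v (hBB hv)
  | spread h v hv _ ih => exact Burns.spread h v hv ih

lemma exists_spread (edges : E → Finset V) {B : Set V} {w : V}
    (hw : Burns edges B w) : w ∉ B →
    ∃ v h, v ∉ B ∧ v ∈ edges h ∧ ∀ u ∈ edges h, u ≠ v → u ∈ B := by
  induction hw with
  | init v hv => exact fun hvB => absurd hv hvB
  | spread h v hv _ ih =>
    intro hvB
    by_cases hall : ∀ u ∈ edges h, u ≠ v → u ∈ B
    · exact ⟨v, h, hvB, hv, hall⟩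
    · push_neg at hall
      obtain ⟨u, hu1, hu2, hu3⟩ := hall
      exact ih u hu1 hu2 hu3

lemma extract_matching [Fintype V] (edges : E → Finset V) :
    ∀ n (B : Finset V), (Finset.univ \ B).card = n → IsLazyBurningSet edges ↑B →
    ∃ L : List (V × E), IsCMatching edges L ∧ (∀ p ∈ L, p.1 ∉ B) ∧
      (L.map Prod.fst).toFinset ∪ B = Finset.univ := by
  intro n
  induction n using Nat.strong_induction_on with
  | _ n ih =>
    intro B hcard hB
    by_cases hBu : B = Finset.univ
    · refine ⟨[], ⟨by simp, by simp, ?_⟩, by simp, by simp [hBu]⟩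
      intro i j hi hj _
      simp at hi
    · have hex : ∃ w : V, w ∉ B := by
        by_contra hc
        push_neg at hc
        exact hBu (Finset.eq_univ_iff_forall.mpr hc)
      obtain ⟨w, hw⟩ := hex
      obtain ⟨v, h, hvB, hvh, hall⟩ := exists_spread edges (hB w) (by simpa using hw)
      have hvB' : v ∉ B := by simpa using hvB
      have hB' : IsLazyBurningSet edges ↑(insert v B) := by
        intro u
        exact burns_mono edges (by intro x hx; simp at hx ⊢; tauto) (hB u)
      have hlt : (Finset.univ \ insert v B).card < n := by
        have h1 : (Finset.univ \ insert v B).card = Fintype.card V - (B.card + 1) := by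
          rw [Finset.card_sdiff_of_subset (Finset.subset_univ _), Finset.card_insert_of_notMem hvB']
          rfl
        have h2 : n = Fintype.card V - B.card := by
          rw [← hcard, Finset.card_sdiff_of_subset (Finset.subset_univ _)]; rfl
        have h3 : B.card < Fintype.card V := by
          have := Finset.card_lt_card (Finset.ssubset_univ_iff.mpr hBu)
          simpa using this
        omega
      obtain ⟨L', hM', hnB', hcov'⟩ := ih _ hlt (insert v B) rfl hB'
      obtain ⟨hm1, hm2, hm3⟩ := hM'
      refine ⟨(v, h) :: L', ⟨?_, ?_, ?_⟩, ?_, ?_⟩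
      · intro p hp
        rcases List.mem_cons.mp hp with rfl | hp
        · exact hvh
        · exact hm1 p hp
      · simp only [List.map_cons, List.nodup_cons]
        constructor
        · intro hmem
          obtain ⟨p, hpL, hpv⟩ := List.mem_map.mp hmem
          exact hnB' p hpL (by simp [hpv])
        · exact hm2
      · intro i j hi hj hij
        match i, j with
        | 0, 0 => omega
        | 0, j + 1 =>
          simp only [List.get_cons_zero, List.get_cons_succ]
          intro hmem
          have hjmem := hm1 _ (List.get_mem L' ⟨j, by simpa using hj⟩)
          have hjB := hnB' _ (List.get_mem L' ⟨j, by simpa using hj⟩)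
          simp only [Finset.mem_insert, not_or] at hjB
          exact hjB.2 (hall _ hmem hjB.1)
        | i + 1, 0 => omega
        | i + 1, j + 1 =>
          simp only [List.get_cons_succ]
          exact hm3 i j (by simpa using hi) (by simpa using hj) (by omega)
      · intro p hp
        rcases List.mem_cons.mp hp with rfl | hp
        · exact hvB'
        · intro hpB
          exact hnB' p hp (Finset.mem_insert_of_mem hpB)
      · rw [← hcov']
        ext x
        simp only [List.map_cons, List.toFinset_cons, Finset.mem_union,
          Finset.mem_insert]
        tauto

lemma matching_burns [Fintype V] (edges : E → Finset V) {L : List (V × E)}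
    (hL : IsCMatching edges L) :
    IsLazyBurningSet edges ↑(Finset.univ \ (List.map Prod.fst L).toFinset) := by
  obtain ⟨h1, _, h3⟩ := hL
  set B : Finset V := Finset.univ \ (List.map Prod.fst L).toFinset with hBdef
  have key : ∀ i (hi : i < L.length), Burns edges ↑B (L.get ⟨i, hi⟩).1 := by
    intro i
    induction i using Nat.strong_induction_on with
    | _ i ih =>
      intro hi
      refine Burns.spread (L.get ⟨i, hi⟩).2 _ (h1 _ (List.get_mem L ⟨i, hi⟩)) ?_
      intro u hu hne
      by_cases hmem : u ∈ List.map Prod.fst L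
      · obtain ⟨p, hpL, hpu⟩ := List.mem_map.mp hmem
        obtain ⟨⟨j, hj⟩, hget⟩ := List.mem_iff_get.mp hpL
        have hueq : u = (L.get ⟨j, hj⟩).1 := by rw [hget, hpu]
        rcases lt_trichotomy j i with hlt | heq | hgt
        · rw [hueq]; exact ih j hlt hj
        · subst heq; exact absurd hueq hne
        · exact absurd hu (hueq ▸ h3 i j hi hj hgt)
      · refine Burns.init u (Finset.mem_coe.mpr ?_)
        exact Finset.mem_sdiff.mpr ⟨Finset.mem_univ u, fun hx => hmem (List.mem_toFinset.mp hx)⟩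
  intro v
  by_cases hv : v ∈ List.map Prod.fst L
  · obtain ⟨p, hpL, hpv⟩ := List.mem_map.mp hv
    obtain ⟨⟨j, hj⟩, hget⟩ := List.mem_iff_get.mp hpL
    have : v = (L.get ⟨j, hj⟩).1 := by rw [hget, hpv]
    rw [this]; exact key j hj
  · refine Burns.init v (Finset.mem_coe.mpr ?_)
    exact Finset.mem_sdiff.mpr ⟨Finset.mem_univ v, fun hx => hv (List.mem_toFinset.mp hx)⟩

end Aux

theorem stmt2 {V E : Type*} [Fintype V] (edges : E → Finset V) :
    lazyBurningNumber edges = Fintype.card V - maxCMatching edges := by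
  set S1 : Set ℕ := {n | ∃ B : Finset V, B.card = n ∧ IsLazyBurningSet edges ↑B} with hS1
  set S2 : Set ℕ := {k | ∃ L : List (V × E), IsCMatching edges L ∧ L.length = k} with hS2
  have hS1ne : (Fintype.card V) ∈ S1 := by
    refine ⟨Finset.univ, by simp, fun v => Burns.init v (by simp)⟩
  have hS2ne : (0 : ℕ) ∈ S2 := by
    refine ⟨[], ⟨by simp, by simp, ?_⟩, by simp⟩
    intro i j hi hj _
    simp at hi
  have hS2bdd : ∀ k ∈ S2, k ≤ Fintype.card V := by
    rintro k ⟨L, ⟨_, hnd, _⟩, rfl⟩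
    calc L.length = (List.map Prod.fst L).length := by simp
    _ = (List.map Prod.fst L).toFinset.card := (List.toFinset_card_of_nodup hnd).symm
    _ ≤ Fintype.card V := Finset.card_le_univ _
  have hmmem : maxCMatching edges ∈ S2 := by
    apply Nat.sSup_mem ⟨0, hS2ne⟩ ⟨Fintype.card V, hS2bdd⟩
  have hbmem : lazyBurningNumber edges ∈ S1 := Nat.sInf_mem ⟨Fintype.card V, hS1ne⟩
  have hble : lazyBurningNumber edges ≤ Fintype.card V := Nat.sInf_le hS1ne
  have hmle : maxCMatching edges ≤ Fintype.card V := hS2bdd _ hmmem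
  -- b ≤ card V - m
  have hdir1 : lazyBurningNumber edges ≤ Fintype.card V - maxCMatching edges := by
    obtain ⟨L, hLM, hLlen⟩ := hmmem
    have hburn := matching_burns edges hLM
    have hcard : (Finset.univ \ (List.map Prod.fst L).toFinset).card =
        Fintype.card V - maxCMatching edges := by
      rw [Finset.card_sdiff_of_subset (Finset.subset_univ _),
        List.toFinset_card_of_nodup hLM.2.1]
      simp [hLlen]
    exact Nat.sInf_le ⟨_, hcard, hburn⟩
  -- card V - b ≤ m
  have hdir2 : Fintype.card V - lazyBurningNumber edges ≤ maxCMatching edges := by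
    obtain ⟨B, hBcard, hBburn⟩ := hbmem
    obtain ⟨L, hLM, hdisj, hcov⟩ := extract_matching edges _ B rfl hBburn
    have hdj : Disjoint (List.map Prod.fst L).toFinset B := by
      rw [Finset.disjoint_left]
      intro a ha
      obtain ⟨p, hpL, hpa⟩ := List.mem_map.mp (List.mem_toFinset.mp ha)
      exact hpa ▸ hdisj p hpL
    have hlen : L.length = Fintype.card V - lazyBurningNumber edges := by
      have := Finset.card_union_of_disjoint hdj
      rw [hcov] at this
      rw [List.toFinset_card_of_nodup hLM.2.1] at this
      simp only [List.length_map, Finset.card_univ, hBcard] at this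
      omega
    exact hlen ▸ le_csSup ⟨Fintype.card V, hS2bdd⟩ ⟨L, hLM, rfl⟩
  omega
end

section
/- If H is a hypergraph with no isolated vertices and maximum hyperedge cardinality \overline{\Delta}, then b_L(H) \le |V(H)| - \lceil |V(H)|/\overline{\Delta} \rceil. -/
open scoped Classical

section Aux

variable {V E : Type*}

open Finset in
private lemma build_list [Fintype V] (edges : E → Finset V)
    (hiso : ∀ v : V, ∃ h : E, v ∈ edges h) :
    ∀ (k : ℕ) (L : List (V × E)),
      (∀ p ∈ L, p.1 ∈ edges p.2) →
      L.Pairwise (fun p q => p.1 ∉ edges q.2) →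
      (Finset.univ \ (L.toFinset.biUnion fun p => edges p.2)).card ≤ k →
      ∃ L' : List (V × E), (∀ p ∈ L', p.1 ∈ edges p.2) ∧
        L'.Pairwise (fun p q => p.1 ∉ edges q.2) ∧
        (∀ v : V, ∃ p ∈ L', v ∈ edges p.2) := by
  intro k
  induction k with
  | zero =>
    intro L h1 h2 h3
    refine ⟨L, h1, h2, fun v => ?_⟩
    have h0 : (Finset.univ \ (L.toFinset.biUnion fun p => edges p.2)) = ∅ :=
      Finset.card_eq_zero.mp (Nat.le_zero.mp h3)
    rw [Finset.sdiff_eq_empty_iff_subset] at h0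
    have hv : v ∈ L.toFinset.biUnion fun p => edges p.2 := h0 (Finset.mem_univ v)
    rcases Finset.mem_biUnion.mp hv with ⟨p, hp, hvp⟩
    exact ⟨p, List.mem_toFinset.mp hp, hvp⟩
  | succ k ih =>
    intro L h1 h2 h3
    by_cases hemp : (Finset.univ \ (L.toFinset.biUnion fun p => edges p.2)) = ∅
    · exact ih L h1 h2 (by simp [hemp])
    · rcases Finset.nonempty_iff_ne_empty.mpr hemp with ⟨v, hv⟩
      rcases hiso v with ⟨h, hvh⟩
      have hvnot : v ∉ L.toFinset.biUnion fun p => edges p.2 :=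
        (Finset.mem_sdiff.mp hv).2
      refine ih ((v, h) :: L) ?_ ?_ ?_
      · intro p hp
        rcases List.mem_cons.mp hp with rfl | hp
        · exact hvh
        · exact h1 p hp
      · refine List.Pairwise.cons ?_ h2
        intro q hq
        intro hcon
        exact hvnot (Finset.mem_biUnion.mpr ⟨q, List.mem_toFinset.mpr hq, hcon⟩)
      · have hsub : (Finset.univ \ (((v, h) :: L).toFinset.biUnion fun p => edges p.2))
            ⊆ (Finset.univ \ (L.toFinset.biUnion fun p => edges p.2)) \ {v} := by
          intro x hx
          rcases Finset.mem_sdiff.mp hx with ⟨hx1, hx2⟩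
          have hxL : x ∉ L.toFinset.biUnion fun p => edges p.2 := by
            intro hc
            rcases Finset.mem_biUnion.mp hc with ⟨p, hp, hxp⟩
            exact hx2 (Finset.mem_biUnion.mpr
              ⟨p, List.mem_toFinset.mpr (List.mem_cons_of_mem _ (List.mem_toFinset.mp hp)), hxp⟩)
          have hxv : x ≠ v := by
            rintro rfl
            exact hx2 (Finset.mem_biUnion.mpr
              ⟨(x, h), List.mem_toFinset.mpr (List.mem_cons_self), hvh⟩)
          simp [Finset.mem_sdiff, hx1, hxL, hxv]
        calc (Finset.univ \ (((v, h) :: L).toFinset.biUnion fun p => edges p.2)).card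
            ≤ ((Finset.univ \ (L.toFinset.biUnion fun p => edges p.2)) \ {v}).card :=
              Finset.card_le_card hsub
          _ ≤ (Finset.univ \ (L.toFinset.biUnion fun p => edges p.2)).card - 1 := by
              rw [Finset.sdiff_singleton_eq_erase]
              exact le_of_eq (Finset.card_erase_of_mem hv)
          _ ≤ k := by omega

end Aux


theorem stmt11 {V E : Type*} [Fintype V] (edges : E → Finset V) (Δ' : ℕ)
    (hiso : ∀ v : V, ∃ h : E, v ∈ edges h)
    (hcard : ∀ h : E, (edges h).card ≤ Δ') :
    lazyBurningNumber edges ≤ Fintype.card V - (Fintype.card V + Δ' - 1) / Δ' := by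
  classical
  -- build a covering "reversed C-matching"
  obtain ⟨L', hmem, hpw, hcov⟩ := build_list edges hiso (Fintype.card V) []
    (by simp) (by simp) (by simp [Finset.card_univ])
  set L : List (V × E) := L'.reverse with hLdef
  have hmemL : ∀ p ∈ L, p.1 ∈ edges p.2 := fun p hp => hmem p (List.mem_reverse.mp hp)
  have hpwL : L.Pairwise (fun p q => q.1 ∉ edges p.2) := by
    rw [hLdef, List.pairwise_reverse]
    exact hpw
  have hgetL : ∀ i j (hi : i < L.length) (hj : j < L.length), i < j →
      (L.get ⟨j, hj⟩).1 ∉ edges (L.get ⟨i, hi⟩).2 := by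
    have := List.pairwise_iff_get.mp hpwL
    intro i j hi hj hij
    exact this ⟨i, hi⟩ ⟨j, hj⟩ hij
  -- the saved vertices
  set S : Finset V := (L.map Prod.fst).toFinset with hSdef
  have hnodup : (L.map Prod.fst).Nodup := by
    rw [List.Nodup, List.pairwise_map]
    refine hpwL.imp_of_mem ?_
    intro a b ha _ hab heq
    exact hab (by rw [← heq]; exact hmemL a ha)
  have hScard : S.card = L.length := by
    rw [hSdef, List.toFinset_card_of_nodup hnodup, List.length_map]
  set B : Finset V := Finset.univ \ S with hBdef
  -- membership in S gives an index
  have hSidx : ∀ u ∈ S, ∃ j, ∃ hj : j < L.length, u = (L.get ⟨j, hj⟩).1 := by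
    intro u hu
    rw [hSdef, List.mem_toFinset, List.mem_map] at hu
    rcases hu with ⟨p, hp, rfl⟩
    rcases List.mem_iff_get.mp hp with ⟨⟨j, hj⟩, rfl⟩
    exact ⟨j, hj, rfl⟩
  -- B is a lazy burning set
  have hburn : ∀ i (hi : i < L.length), Burns edges ↑B (L.get ⟨i, hi⟩).1 := by
    intro i
    induction i using Nat.strong_induction_on with
    | _ i ih =>
      intro hi
      refine Burns.spread (L.get ⟨i, hi⟩).2 _ (hmemL _ (L.get_mem _)) ?_
      intro u hu hne
      by_cases huB : u ∈ B
      · exact Burns.init u huB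
      · have huS : u ∈ S := by
          rw [hBdef] at huB; simp at huB; exact huB
        rcases hSidx u huS with ⟨j, hj, rfl⟩
        rcases lt_trichotomy j i with hji | rfl | hij
        · exact ih j hji hj
        · exact absurd rfl hne
        · exact absurd hu (hgetL i j hi hj hij)
  have hBset : IsLazyBurningSet edges ↑B := by
    intro v
    by_cases hvB : v ∈ B
    · exact Burns.init v hvB
    · have hvS : v ∈ S := by rw [hBdef] at hvB; simp at hvB; exact hvB
      rcases hSidx v hvS with ⟨j, hj, rfl⟩
      exact hburn j hj
  -- length bound
  have hlen_le : L.length ≤ Fintype.card V := by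
    rw [← hScard, ← Finset.card_univ]
    exact Finset.card_le_card (Finset.subset_univ S)
  have hcover : Fintype.card V ≤ L.length * Δ' := by
    have hsub : (Finset.univ : Finset V) ⊆ L.toFinset.biUnion fun p => edges p.2 := by
      intro v _
      rcases hcov v with ⟨p, hp, hvp⟩
      exact Finset.mem_biUnion.mpr ⟨p, List.mem_toFinset.mpr (by rw [hLdef]; exact List.mem_reverse.mpr hp), hvp⟩
    calc Fintype.card V = (Finset.univ : Finset V).card := (Finset.card_univ).symm
      _ ≤ (L.toFinset.biUnion fun p => edges p.2).card := Finset.card_le_card hsub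
      _ ≤ ∑ p ∈ L.toFinset, (edges p.2).card := Finset.card_biUnion_le
      _ ≤ L.toFinset.card * Δ' := by
          refine Finset.sum_le_card_nsmul _ _ _ ?_
          intro p _; exact hcard p.2
      _ ≤ L.length * Δ' := Nat.mul_le_mul_right _ L.toFinset_card_le
  have hceil : (Fintype.card V + Δ' - 1) / Δ' ≤ L.length := by
    rcases Nat.eq_zero_or_pos Δ' with rfl | hΔ
    · simp
    · rw [Nat.div_le_iff_le_mul_add_pred hΔ]
      have h2 := hcover
      rw [Nat.mul_comm] at h2
      omega
  have hBcard : B.card = Fintype.card V - L.length := by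
    rw [hBdef, Finset.card_sdiff_of_subset (Finset.subset_univ S), Finset.card_univ, hScard]
  have hlbn : lazyBurningNumber edges ≤ B.card :=
    Nat.sInf_le ⟨B, rfl, hBset⟩
  calc lazyBurningNumber edges ≤ B.card := hlbn
    _ = Fintype.card V - L.length := hBcard
    _ ≤ Fintype.card V - (Fintype.card V + Δ' - 1) / Δ' := Nat.sub_le_sub_left hceil _
end

section
/- For a hypergraph H, a subset B \subseteq V(H) is a lazy burning set for H if and only if B \cup E(H) is a zero forcing set for the incidence graph IG(H). In particular, z(IG(H)) \le b_L(H) + |E(H)|. -/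
open scoped Classical

theorem stmt17 {V E : Type*} [Fintype V] [Fintype E] (edges : E → Finset V) :
    (∀ B : Set V, IsLazyBurningSet edges B ↔
        IsZeroForcingSet (incidenceGraph edges) (Sum.inl '' B ∪ Set.range Sum.inr)) ∧
    zeroForcingNumber (incidenceGraph edges) ≤ lazyBurningNumber edges + Fintype.card E := by
  have main : ∀ B : Set V, IsLazyBurningSet edges B ↔
      IsZeroForcingSet (incidenceGraph edges) (Sum.inl '' B ∪ Set.range Sum.inr) := by
    intro B
    constructor
    · intro hB x
      have hinr : ∀ h : E, ZFClosure (incidenceGraph edges)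
          (Sum.inl '' B ∪ Set.range Sum.inr) (Sum.inr h) :=
        fun h => ZFClosure.init _ (Or.inr ⟨h, rfl⟩)
      have hinl : ∀ v, Burns edges B v →
          ZFClosure (incidenceGraph edges) (Sum.inl '' B ∪ Set.range Sum.inr) (Sum.inl v) := by
        intro v hv
        induction hv with
        | init v hv => exact ZFClosure.init _ (Or.inl ⟨v, hv, rfl⟩)
        | spread h v hvh hall ih =>
          refine ZFClosure.force (Sum.inr h) (Sum.inl v) (hinr h)
            (Or.inr ⟨v, h, rfl, rfl, hvh⟩) ?_
          rintro w (⟨v', h', hw1, hw2, hm⟩ | ⟨v', h', hw1, hw2, hm⟩) hne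
          · exact absurd hw1 (by simp)
          · injection hw1 with hh
            subst hh; subst hw2
            exact ih v' hm (fun heq => hne (by rw [heq]))
      cases x with
      | inl v => exact hinl v (hB v)
      | inr h => exact hinr h
    · intro hZF v
      have key : ∀ x, ZFClosure (incidenceGraph edges) (Sum.inl '' B ∪ Set.range Sum.inr) x →
          ∀ v, x = Sum.inl v → Burns edges B v := by
        intro x hx
        induction hx with
        | init y hy =>
          rintro v rfl
          rcases hy with ⟨w, hw, hw2⟩ | ⟨h, hh⟩
          · injection hw2 with h'; subst h'; exact Burns.init _ hw
          · exact absurd hh (by simp)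
        | force u y hu hadj hall ihu ihall =>
          rintro v rfl
          rcases hadj with ⟨v', h', h1, h2, hm⟩ | ⟨v', h', h1, h2, hm⟩
          · exact absurd h2 (by simp)
          · injection h2 with hv
            subst hv; subst h1
            refine Burns.spread h' v hm ?_
            intro u hu' hne
            exact ihall (Sum.inl u) (Or.inr ⟨u, h', rfl, rfl, hu'⟩)
              (fun heq => hne (Sum.inl.inj heq)) u rfl
      exact key _ (hZF (Sum.inl v)) v rfl
  refine ⟨main, ?_⟩
  have hne : {n | ∃ B : Finset V, B.card = n ∧ IsLazyBurningSet edges ↑B}.Nonempty :=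
    ⟨_, Finset.univ, rfl, fun v => Burns.init v (by simp)⟩
  obtain ⟨B, hBcard, hBburn⟩ := Nat.sInf_mem hne
  set B' : Finset (V ⊕ E) := B.image Sum.inl ∪ Finset.univ.image Sum.inr with hB'
  have hcoe : (↑B' : Set (V ⊕ E)) = Sum.inl '' ↑B ∪ Set.range Sum.inr := by
    simp [hB', Set.image_univ]
  have hZF := (main ↑B).mp hBburn
  rw [← hcoe] at hZF
  have hle : zeroForcingNumber (incidenceGraph edges) ≤ B'.card :=
    Nat.sInf_le ⟨B', rfl, hZF⟩
  have hcard : B'.card ≤ B.card + Fintype.card E := by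
    refine (Finset.card_union_le _ _).trans (add_le_add Finset.card_image_le ?_)
    exact (Finset.card_image_le).trans (le_of_eq (Finset.card_univ))
  have : lazyBurningNumber edges = B.card := hBcard.symm
  omega
end

section
/- Let G be a graph and B \subseteq V(G). Then B is a skew zero forcing set for G if and only if B is a lazy burning set for the open neighborhood hypergraph \mathcal{N}(G). In particular, z_0(G) = b_L(\mathcal{N}(G)). -/
open scoped Classical

lemma skew_iff_burns {α : Type*} [Fintype α] (G : SimpleGraph α) [DecidableRel G.Adj]
    (B : Set α) (v : α) :
    SkewZFClosure G B v ↔ Burns (fun v => G.neighborFinset v) B v := by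
  constructor
  · intro h
    induction h with
    | init v hv => exact Burns.init v hv
    | force u v hadj hall ih =>
      exact Burns.spread u v (by simpa using hadj) (fun w hw hne => ih w (by simpa using hw) hne)
  · intro h
    induction h with
    | init v hv => exact SkewZFClosure.init v hv
    | spread u v hv hall ih =>
      exact SkewZFClosure.force u v (by simpa using hv) (fun w hw hne => ih w (by simpa using hw) hne)

theorem stmt18 {α : Type*} [Fintype α] (G : SimpleGraph α) [DecidableRel G.Adj] (B : Set α) :
    (IsSkewZeroForcingSet G B ↔ IsLazyBurningSet (fun v => G.neighborFinset v) B) ∧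
    skewZeroForcingNumber G = lazyBurningNumber (fun v => G.neighborFinset v) := by
  have key : ∀ B : Set α, IsSkewZeroForcingSet G B ↔
      IsLazyBurningSet (fun v => G.neighborFinset v) B := fun B =>
    forall_congr' (fun v => skew_iff_burns G B v)
  refine ⟨key B, ?_⟩
  unfold skewZeroForcingNumber lazyBurningNumber
  congr 1
  ext n
  simp only [Set.mem_setOf_eq]
  exact exists_congr (fun B => and_congr_right (fun _ => key ↑B))
end
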